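/- Let Rf(t,ω) = ∫_{−1}^1 f(tω + sω^⊥) ds and let λ be a Borel measure on S¹ with λ(B(ω₀,δ)) ≥ c·δ^α for some fixed ω₀ ∈ S¹ and all small δ > 0. If the inequality ( ∫_{S¹} ( ∫_{−1}^1 |Rf(t,ω)|^s dt )^{q/s} dλ(ω) )^{1/q} ≤ C‖f‖_{L^p(ℝ²)} holds for all f, then 1/p ≤ 1/s + α/q. -/

import Mathlib

open MeasureTheory Metric Set
open scoped ENNReal

noncomputable section

abbrev Plane := EuclideanSpace ℝ (Fin 2)
abbrev Circ := Metric.sphere (0 : Plane) 1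

/-- The restricted Radon transform. -/
def Rad (perp : Circ → Plane) (f : Plane → ℝ) (t : ℝ) (ω : Circ) : ℝ :=
  ∫ s in (-1 : ℝ)..1, f (t • (ω : Plane) + s • perp ω)

/-- The mixed norm on the left-hand side of the estimate. -/
def mixedNorm (lam : Measure Circ) (s q : ℝ) (g : ℝ → Circ → ℝ) : ℝ≥0∞ :=
  (∫⁻ ω, (ENNReal.ofReal (∫ t in (-1 : ℝ)..1, |g t ω| ^ s)) ^ (q / s) ∂lam) ^ (1 / q)


lemma exp_compare {A B β γ ε : ℝ} (hA : 0 < A) (hε : 0 < ε)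
    (h : ∀ δ : ℝ, 0 < δ → δ < ε → A * δ ^ β ≤ B * δ ^ γ) : γ ≤ β := by
  by_contra hlt
  push_neg at hlt
  set e := γ - β with he
  have hepos : 0 < e := by simp [he]; linarith
  -- B > 0
  have hδ1 : (0:ℝ) < min (ε/2) 1 := by positivity
  have hδ1' : min (ε/2) 1 < ε := lt_of_le_of_lt (min_le_left _ _) (by linarith)
  have hB : 0 < B := by
    have h1 := h _ hδ1 hδ1'
    have h2 : 0 < A * (min (ε/2) 1) ^ β := by positivity
    have h3 : 0 < B * (min (ε/2) 1) ^ γ := lt_of_lt_of_le h2 h1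
    have h4 : (0:ℝ) < (min (ε/2) 1) ^ γ := Real.rpow_pos_of_pos hδ1 _
    by_contra hB
    push_neg at hB
    nlinarith [h3, h4]
  set δ := min (ε/2) ((A/B) ^ (1/e) / 2) with hδdef
  have hABpos : 0 < (A/B) ^ (1/e) := Real.rpow_pos_of_pos (by positivity) _
  have hδpos : 0 < δ := lt_min (by positivity) (by positivity)
  have hδε : δ < ε := lt_of_le_of_lt (min_le_left _ _) (by linarith)
  have hδAB : δ < (A/B) ^ (1/e) := lt_of_le_of_lt (min_le_right _ _) (by linarith)
  have key := h δ hδpos hδε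
  have hrw : δ ^ γ = δ ^ e * δ ^ β := by
    rw [← Real.rpow_add hδpos]; congr 1; ring
  rw [hrw, ← mul_assoc] at key
  have hβpos : (0:ℝ) < δ ^ β := Real.rpow_pos_of_pos hδpos _
  have key2 : A ≤ B * δ ^ e := le_of_mul_le_mul_right key hβpos
  have h5 : δ ^ e < (A/B) := by
    calc δ ^ e < ((A/B) ^ (1/e)) ^ e :=
          Real.rpow_lt_rpow (le_of_lt hδpos) hδAB hepos
      _ = A/B := by
          rw [← Real.rpow_mul (by positivity), one_div, inv_mul_cancel₀ (ne_of_gt hepos),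
            Real.rpow_one]
  have : B * δ ^ e < A := by
    have := mul_lt_mul_of_pos_left h5 hB
    rwa [mul_div_cancel₀ _ (ne_of_gt hB)] at this
  linarith

lemma vol_rect (u v : Plane) (hu : ‖u‖ = 1) (hv : ‖v‖ = 1)
    (huv : (inner ℝ u v : ℝ) = 0) (a b : ℝ) :
    volume {x : Plane | |(inner ℝ u x : ℝ)| ≤ a ∧ |(inner ℝ v x : ℝ)| ≤ b} =
      ENNReal.ofReal (2*a) * ENNReal.ofReal (2*b) := by
  have hon : Orthonormal ℝ ![u, v] := by
    rw [orthonormal_iff_ite]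
    intro i j
    have h1 : (inner ℝ u u : ℝ) = 1 := by
      rw [real_inner_self_eq_norm_mul_norm, hu]; norm_num
    have h2 : (inner ℝ v v : ℝ) = 1 := by
      rw [real_inner_self_eq_norm_mul_norm, hv]; norm_num
    have h3 : (inner ℝ v u : ℝ) = 0 := by rw [real_inner_comm]; exact huv
    fin_cases i <;> fin_cases j <;>
      simp only [Matrix.cons_val_zero, Matrix.cons_val_one, Matrix.head_cons, Fin.mk_zero,
        Fin.mk_one, if_true, reduceIte] <;> first
      | exact h1 | exact h2 | exact h3 | exact huv
  have hcard : Fintype.card (Fin 2) = Module.finrank ℝ Plane := by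
    simp [finrank_euclideanSpace]
  have hsp : ⊤ ≤ Submodule.span ℝ (Set.range ![u, v]) := by
    rw [← coe_basisOfOrthonormalOfCardEqFinrank hon hcard]
    exact (basisOfOrthonormalOfCardEqFinrank hon hcard).span_eq.ge
  set b2 : OrthonormalBasis (Fin 2) ℝ Plane := OrthonormalBasis.mk hon hsp with hb2
  have hb20 : b2 0 = u := by rw [hb2, OrthonormalBasis.coe_mk]; rfl
  have hb21 : b2 1 = v := by rw [hb2, OrthonormalBasis.coe_mk]; rfl
  have hset : {x : Plane | |(inner ℝ u x : ℝ)| ≤ a ∧ |(inner ℝ v x : ℝ)| ≤ b} =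
      b2.repr ⁻¹' {y : EuclideanSpace ℝ (Fin 2) | |y 0| ≤ a ∧ |y 1| ≤ b} := by
    ext x
    simp [OrthonormalBasis.repr_apply_apply, hb20, hb21]
  rw [hset]
  have hmeas : MeasurableSet {y : EuclideanSpace ℝ (Fin 2) | |y 0| ≤ a ∧ |y 1| ≤ b} := by
    apply MeasurableSet.inter
    · exact measurableSet_le ((measurable_pi_apply 0).comp
        (MeasurableEquiv.toLp 2 (Fin 2 → ℝ)).symm.measurable).abs measurable_const
    · exact measurableSet_le ((measurable_pi_apply 1).comp
        (MeasurableEquiv.toLp 2 (Fin 2 → ℝ)).symm.measurable).abs measurable_const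
  rw [(b2.repr.measurePreserving).measure_preimage hmeas.nullMeasurableSet]
  have := (EuclideanSpace.volume_preserving_symm_measurableEquiv_toLp (Fin 2)).symm
  rw [← this.measure_preimage]
  · have hset2 : (MeasurableEquiv.toLp 2 (Fin 2 → ℝ)).symm.symm ⁻¹'
        {y : EuclideanSpace ℝ (Fin 2) | |y 0| ≤ a ∧ |y 1| ≤ b} =
        Set.pi Set.univ ![Icc (-a) a, Icc (-b) b] := by
      ext y
      simp only [Set.mem_preimage, Set.mem_setOf_eq, Set.mem_pi, Set.mem_univ, forall_true_left,
        Fin.forall_fin_two, Matrix.cons_val_zero, Matrix.cons_val_one, Matrix.head_cons,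
        mem_Icc, abs_le]
      rfl
    rw [hset2, volume_pi_pi, Fin.prod_univ_two]
    simp [Real.volume_Icc]
    congr 1 <;> ring_nf <;> rw [ENNReal.ofReal_mul' (by norm_num)] <;> norm_num
  · exact hmeas.nullMeasurableSet

lemma inner_bound (E : Set Plane) (hE : MeasurableSet E) (perp : Circ → Plane) (ω : Circ)
    (δ s : ℝ) (hδ : 0 < δ) (hδ1 : δ ≤ 1) (hs : 1 ≤ s)
    (hline : ∀ t : ℝ, |t| ≤ δ → ∀ r ∈ Icc (-1:ℝ) 1, (t • (ω : Plane) + r • perp ω) ∈ E) :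
    2 ^ s * (2 * δ) ≤
      ∫ t in (-1:ℝ)..1, |Rad perp (E.indicator fun _ => (1:ℝ)) t ω| ^ s := by
  set f : Plane → ℝ := E.indicator fun _ => (1:ℝ) with hfdef
  have hf : Measurable f := measurable_const.indicator hE
  have h0 : ∀ x, 0 ≤ f x := fun x => Set.indicator_nonneg (fun _ _ => zero_le_one) x
  have h1 : ∀ x, f x ≤ 1 := fun x => Set.indicator_le_self' (fun _ _ => zero_le_one) x
  have hcont : ∀ t : ℝ, Continuous fun r : ℝ => t • (ω : Plane) + r • perp ω := fun t =>
    continuous_const.add (continuous_id.smul continuous_const)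
  have hRnn : ∀ t, 0 ≤ Rad perp f t ω := fun t =>
    intervalIntegral.integral_nonneg (by norm_num) (fun r _ => h0 _)
  have hII : ∀ t : ℝ, IntervalIntegrable (fun r => f (t • (ω : Plane) + r • perp ω))
      volume (-1) 1 := by
    intro t
    rw [intervalIntegrable_iff_integrableOn_Ioc_of_le (by norm_num)]
    refine Integrable.mono' (integrable_const 1)
      ((hf.comp (hcont t).measurable).aestronglyMeasurable) ?_
    filter_upwards with r
    rw [Real.norm_eq_abs, abs_of_nonneg (h0 _)]
    exact h1 _
  have hR2 : ∀ t, Rad perp f t ω ≤ 2 := by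
    intro t
    have := intervalIntegral.integral_mono_on (μ := volume) (by norm_num : (-1:ℝ) ≤ 1)
      (hII t) intervalIntegrable_const (fun r _ => h1 _)
    show Rad perp f t ω ≤ 2
    unfold Rad
    simp only [intervalIntegral.integral_const, smul_eq_mul] at this
    linarith [this]
  have hmeasR : Measurable fun t => Rad perp f t ω := by
    have heq : ∀ t, Rad perp f t ω =
        ∫ r in Ioc (-1:ℝ) 1, f (t • (ω : Plane) + r • perp ω) := fun t =>
      intervalIntegral.integral_of_le (by norm_num)
    simp only [heq]
    have hg : StronglyMeasurable fun p : ℝ × ℝ => f (p.1 • (ω : Plane) + p.2 • perp ω) := by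
      have : Continuous fun p : ℝ × ℝ => p.1 • (ω : Plane) + p.2 • perp ω :=
        (continuous_fst.smul continuous_const).add (continuous_snd.smul continuous_const)
      exact (hf.comp this.measurable).stronglyMeasurable
    exact (hg.integral_prod_right').measurable
  have hR : ∀ t : ℝ, |t| ≤ δ → Rad perp f t ω = 2 := by
    intro t ht
    have : Rad perp f t ω = ∫ r in (-1:ℝ)..1, (1:ℝ) := by
      refine intervalIntegral.integral_congr ?_
      intro r hr
      rw [Set.uIcc_of_le (by norm_num : (-1:ℝ) ≤ 1)] at hr
      exact Set.indicator_of_mem (hline t ht r hr) _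
    rw [this]; norm_num
  set F : ℝ → ℝ := fun t => |Rad perp f t ω| ^ s with hFdef
  have hFm : Measurable F := (Real.continuous_rpow_const (by linarith : (0:ℝ) ≤ s)).measurable.comp hmeasR.abs
  have hFnn : ∀ t, 0 ≤ F t := fun t => Real.rpow_nonneg (abs_nonneg _) _
  have hFle : ∀ t, F t ≤ 2 ^ s := by
    intro t
    refine Real.rpow_le_rpow (abs_nonneg _) ?_ (by linarith)
    rw [abs_of_nonneg (hRnn t)]; exact hR2 t
  have hFint : IntegrableOn F (Ioc (-1:ℝ) 1) volume := by
    refine Integrable.mono' (integrable_const (2 ^ s)) hFm.aestronglyMeasurable ?_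
    filter_upwards with t
    rw [Real.norm_eq_abs, abs_of_nonneg (hFnn t)]
    exact hFle t
  have step1 : (2:ℝ) ^ s * (2 * δ) = ∫ t in Ioc (-δ) δ, (2:ℝ) ^ s := by
    rw [setIntegral_const, measureReal_def, Real.volume_Ioc]
    rw [ENNReal.toReal_ofReal (by linarith)]
    ring_nf
  have step2 : (∫ t in Ioc (-δ) δ, (2:ℝ) ^ s) = ∫ t in Ioc (-δ) δ, F t := by
    refine setIntegral_congr_fun measurableSet_Ioc ?_
    intro t ht
    have ht' : |t| ≤ δ := abs_le.2 ⟨le_of_lt ht.1, ht.2⟩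
    rw [hFdef]; simp only
    rw [hR t ht', abs_of_nonneg (by norm_num : (0:ℝ) ≤ 2)]
  have step3 : (∫ t in Ioc (-δ) δ, F t) ≤ ∫ t in Ioc (-1:ℝ) 1, F t := by
    refine setIntegral_mono_set hFint ?_ ?_
    · filter_upwards with t using hFnn t
    · exact (Ioc_subset_Ioc (by linarith) (by linarith)).eventuallyLE
  have step4 : (∫ t in Ioc (-1:ℝ) 1, F t) = ∫ t in (-1:ℝ)..1, F t :=
    (intervalIntegral.integral_of_le (by norm_num)).symm
  calc 2 ^ s * (2 * δ) = ∫ t in Ioc (-δ) δ, (2:ℝ) ^ s := step1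
    _ = ∫ t in Ioc (-δ) δ, F t := step2
    _ ≤ ∫ t in Ioc (-1:ℝ) 1, F t := step3
    _ = ∫ t in (-1:ℝ)..1, F t := step4

theorem stmt6 (α : ℝ) (hα : 0 < α) (hα1 : α < 1)
    (p q s : ℝ) (hp : 1 ≤ p) (hq : 1 ≤ q) (hs : 1 ≤ s)
    (lam : Measure Circ) [IsFiniteMeasure lam]
    (perp : Circ → Plane) (hperp : ∀ ω, ‖perp ω‖ = 1 ∧ (inner ℝ (perp ω) (ω : Plane) : ℝ) = 0)
    (ω₀ : Circ) (c : ℝ) (hc : 0 < c) (δ₀ : ℝ) (hδ₀ : 0 < δ₀)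
    (hlower : ∀ δ : ℝ, 0 < δ → δ < δ₀ →
      ENNReal.ofReal (c * δ ^ α) ≤ lam (Metric.ball ω₀ δ))
    (C : ℝ)
    (hest : ∀ f : Plane → ℝ, Measurable f →
      mixedNorm lam s q (fun t ω => Rad perp f t ω) ≤
        ENNReal.ofReal C * eLpNorm f (ENNReal.ofReal p) volume) :
    1 / p ≤ 1 / s + α / q := by
  have hp0 : (0:ℝ) < p := by linarith
  have hq0 : (0:ℝ) < q := by linarith
  have hs0 : (0:ℝ) < s := by linarith
  set u : Plane := (ω₀ : Plane) with hudef
  set v : Plane := perp ω₀ with hvdef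
  have hu : ‖u‖ = 1 := mem_sphere_zero_iff_norm.mp ω₀.2
  have hv : ‖v‖ = 1 := (hperp ω₀).1
  have huv : (inner ℝ u v : ℝ) = 0 := by
    rw [real_inner_comm]; exact (hperp ω₀).2
  set C' : ℝ := max C 0 with hC'def
  have hC' : 0 ≤ C' := le_max_right _ _
  have hCeq : ENNReal.ofReal C = ENNReal.ofReal C' := by
    rcases le_total C 0 with h | h
    · rw [ENNReal.ofReal_of_nonpos h, hC'def, max_eq_right h, ENNReal.ofReal_zero]
    · rw [hC'def, max_eq_left h]
  set A : ℝ := (2 ^ s * 2) ^ (q / s) * c with hAdef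
  set B : ℝ := C' ^ q * 24 ^ (q / p) with hBdef
  have hA : 0 < A := by positivity
  have key : ∀ δ : ℝ, 0 < δ → δ < min δ₀ 1 → A * δ ^ (q / s + α) ≤ B * δ ^ (q / p) := by
    intro δ hδ hδlt
    have hδδ₀ : δ < δ₀ := lt_of_lt_of_le hδlt (min_le_left _ _)
    have hδ1 : δ ≤ 1 := le_of_lt (lt_of_lt_of_le hδlt (min_le_right _ _))
    set E : Set Plane := {x | |(inner ℝ u x : ℝ)| ≤ 3 * δ ∧ |(inner ℝ v x : ℝ)| ≤ 2} with hEdef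
    have hcont1 : Continuous fun x : Plane => (inner ℝ u x : ℝ) :=
      continuous_const.inner continuous_id
    have hcont2 : Continuous fun x : Plane => (inner ℝ v x : ℝ) :=
      continuous_const.inner continuous_id
    have hE : MeasurableSet E :=
      ((isClosed_le hcont1.abs continuous_const).measurableSet).inter
        ((isClosed_le hcont2.abs continuous_const).measurableSet)
    set f : Plane → ℝ := E.indicator fun _ => (1:ℝ) with hfdef
    have hfm : Measurable f := measurable_const.indicator hE
    -- lines through rectangle
    have hline : ∀ ω : Circ, ω ∈ ball ω₀ δ → ∀ t : ℝ, |t| ≤ δ →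
        ∀ r ∈ Icc (-1:ℝ) 1, (t • (ω : Plane) + r • perp ω) ∈ E := by
      intro ω hω t ht r hr
      have hωn : ‖(ω : Plane)‖ = 1 := mem_sphere_zero_iff_norm.mp ω.2
      have hpn : ‖perp ω‖ = 1 := (hperp ω).1
      have hdist : ‖u - (ω : Plane)‖ < δ := by
        have := mem_ball.mp hω
        rw [Subtype.dist_eq, dist_eq_norm] at this
        rwa [hudef, norm_sub_rev]
      have hr' : |r| ≤ 1 := abs_le.2 ⟨hr.1, hr.2⟩
      constructor
      · show |(inner ℝ u (t • (ω : Plane) + r • perp ω) : ℝ)| ≤ 3 * δ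
        rw [inner_add_right, real_inner_smul_right, real_inner_smul_right]
        have h1 : |(inner ℝ u (ω : Plane) : ℝ)| ≤ 1 := by
          have := abs_real_inner_le_norm u (ω : Plane)
          rwa [hu, hωn, one_mul] at this
        have h2 : |(inner ℝ u (perp ω) : ℝ)| ≤ δ := by
          have heq : (inner ℝ u (perp ω) : ℝ) = inner ℝ (u - (ω : Plane)) (perp ω) := by
            rw [inner_sub_left]
            have : (inner ℝ (ω : Plane) (perp ω) : ℝ) = 0 := by
              rw [real_inner_comm]; exact (hperp ω).2
            rw [this, sub_zero]
          rw [heq]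
          have := abs_real_inner_le_norm (u - (ω : Plane)) (perp ω)
          rw [hpn, mul_one] at this
          linarith
        calc |t * (inner ℝ u (ω : Plane) : ℝ) + r * (inner ℝ u (perp ω) : ℝ)|
            ≤ |t * (inner ℝ u (ω : Plane) : ℝ)| + |r * (inner ℝ u (perp ω) : ℝ)| := abs_add_le _ _
          _ = |t| * |(inner ℝ u (ω : Plane) : ℝ)| + |r| * |(inner ℝ u (perp ω) : ℝ)| := by
              rw [abs_mul, abs_mul]
          _ ≤ δ * 1 + 1 * δ := by
              gcongr <;> first | exact ht | exact h1 | exact hr' | exact h2 | positivity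
          _ ≤ 3 * δ := by linarith
      · show |(inner ℝ v (t • (ω : Plane) + r • perp ω) : ℝ)| ≤ 2
        rw [inner_add_right, real_inner_smul_right, real_inner_smul_right]
        have h1 : |(inner ℝ v (ω : Plane) : ℝ)| ≤ 1 := by
          have := abs_real_inner_le_norm v (ω : Plane)
          rwa [hv, hωn, one_mul] at this
        have h2 : |(inner ℝ v (perp ω) : ℝ)| ≤ 1 := by
          have := abs_real_inner_le_norm v (perp ω)
          rwa [hv, hpn, one_mul] at this
        calc |t * (inner ℝ v (ω : Plane) : ℝ) + r * (inner ℝ v (perp ω) : ℝ)|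
            ≤ |t| * |(inner ℝ v (ω : Plane) : ℝ)| + |r| * |(inner ℝ v (perp ω) : ℝ)| := by
              rw [← abs_mul, ← abs_mul]; exact abs_add_le _ _
          _ ≤ δ * 1 + 1 * 1 := by
              gcongr <;> first | exact ht | exact h1 | exact hr' | exact h2 | positivity
          _ ≤ 2 := by linarith
    -- inner integral lower bound on the ball
    have hinner : ∀ ω : Circ, ω ∈ ball ω₀ δ →
        2 ^ s * (2 * δ) ≤ ∫ t in (-1:ℝ)..1, |Rad perp f t ω| ^ s := by
      intro ω hω
      exact inner_bound E hE perp ω δ s hδ hδ1 hs (hline ω hω)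
    -- ENNReal chain
    set K : ℝ≥0∞ := (ENNReal.ofReal (2 ^ s * (2 * δ))) ^ (q / s) with hKdef
    have hqs : (0:ℝ) ≤ q / s := by positivity
    have hlhs : K * ENNReal.ofReal (c * δ ^ α) ≤
        (mixedNorm lam s q (fun t ω => Rad perp f t ω)) ^ q := by
      have hmn : (mixedNorm lam s q (fun t ω => Rad perp f t ω)) ^ q =
          ∫⁻ ω, (ENNReal.ofReal (∫ t in (-1:ℝ)..1, |Rad perp f t ω| ^ s)) ^ (q / s) ∂lam := by
        rw [mixedNorm, ← ENNReal.rpow_mul, one_div, inv_mul_cancel₀ (ne_of_gt hq0),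
          ENNReal.rpow_one]
      rw [hmn]
      calc K * ENNReal.ofReal (c * δ ^ α)
          ≤ K * lam (ball ω₀ δ) := by
            gcongr
            exact hlower δ hδ hδδ₀
        _ = ∫⁻ ω, (ball ω₀ δ).indicator (fun _ => K) ω ∂lam := by
            rw [lintegral_indicator_const measurableSet_ball, mul_comm]
        _ ≤ _ := by
            refine lintegral_mono fun ω => ?_
            by_cases hω : ω ∈ ball ω₀ δ
            · rw [Set.indicator_of_mem hω]
              exact ENNReal.rpow_le_rpow (ENNReal.ofReal_le_ofReal (hinner ω hω)) hqs
            · rw [Set.indicator_of_notMem hω]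
              exact zero_le
    -- upper bound
    have hvol : volume E = ENNReal.ofReal (24 * δ) := by
      rw [hEdef, vol_rect u v hu hv huv (3*δ) 2, ← ENNReal.ofReal_mul (by linarith)]
      ring_nf
    have hsnorm : eLpNorm f (ENNReal.ofReal p) volume = (ENNReal.ofReal (24 * δ)) ^ (1/p) := by
      rw [hfdef, eLpNorm_indicator_const hE (by simp [ENNReal.ofReal_eq_zero]; linarith)
        ENNReal.ofReal_ne_top, hvol, ENNReal.toReal_ofReal (by linarith)]
      simp
    have hub := hest f hfm
    rw [hsnorm, hCeq] at hub
    have hub2 : (mixedNorm lam s q (fun t ω => Rad perp f t ω)) ^ q ≤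
        (ENNReal.ofReal C') ^ q * (ENNReal.ofReal (24 * δ)) ^ (q/p) := by
      calc (mixedNorm lam s q (fun t ω => Rad perp f t ω)) ^ q
          ≤ (ENNReal.ofReal C' * (ENNReal.ofReal (24 * δ)) ^ (1/p)) ^ q :=
            ENNReal.rpow_le_rpow hub (le_of_lt hq0)
        _ = (ENNReal.ofReal C') ^ q * (ENNReal.ofReal (24 * δ)) ^ (q/p) := by
            rw [ENNReal.mul_rpow_of_nonneg _ _ (le_of_lt hq0), ← ENNReal.rpow_mul]
            congr 1
            ring
    have hcomb : ENNReal.ofReal ((2 ^ s * (2 * δ)) ^ (q/s) * (c * δ ^ α)) ≤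
        ENNReal.ofReal (C' ^ q * (24 * δ) ^ (q/p)) := by
      have e1 : K = ENNReal.ofReal ((2 ^ s * (2 * δ)) ^ (q/s)) := by
        rw [hKdef, ← ENNReal.ofReal_rpow_of_pos (by positivity)]
      have e2 : (ENNReal.ofReal C') ^ q = ENNReal.ofReal (C' ^ q) := by
        rw [← ENNReal.ofReal_rpow_of_nonneg hC' (le_of_lt hq0)]
      have e3 : (ENNReal.ofReal (24 * δ)) ^ (q/p) = ENNReal.ofReal ((24 * δ) ^ (q/p)) := by
        rw [← ENNReal.ofReal_rpow_of_pos (by positivity)]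
      calc ENNReal.ofReal ((2 ^ s * (2 * δ)) ^ (q/s) * (c * δ ^ α))
          = K * ENNReal.ofReal (c * δ ^ α) := by
            rw [e1, ENNReal.ofReal_mul (by positivity)]
        _ ≤ (ENNReal.ofReal C') ^ q * (ENNReal.ofReal (24 * δ)) ^ (q/p) :=
            le_trans hlhs hub2
        _ = ENNReal.ofReal (C' ^ q * (24 * δ) ^ (q/p)) := by
            rw [e2, e3, ← ENNReal.ofReal_mul (by positivity)]
    have hreal : (2 ^ s * (2 * δ)) ^ (q/s) * (c * δ ^ α) ≤ C' ^ q * (24 * δ) ^ (q/p) :=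
      (ENNReal.ofReal_le_ofReal_iff (by positivity)).mp hcomb
    -- massage into A δ^β ≤ B δ^γ
    have lrw : (2 ^ s * (2 * δ)) ^ (q/s) * (c * δ ^ α) = A * δ ^ (q/s + α) := by
      rw [hAdef]
      have : (2:ℝ) ^ s * (2 * δ) = (2 ^ s * 2) * δ := by ring
      rw [this, Real.mul_rpow (by positivity) (le_of_lt hδ), Real.rpow_add hδ]
      ring
    have rrw : C' ^ q * (24 * δ) ^ (q/p) = B * δ ^ (q/p) := by
      rw [hBdef, Real.mul_rpow (by norm_num) (le_of_lt hδ)]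
      ring
    rw [lrw, rrw] at hreal
    exact hreal
  have hmain : q / p ≤ q / s + α :=
    exp_compare hA (lt_min hδ₀ one_pos) key
  have e1 : q * (1/p) = q / p := by ring
  have e2 : q * (1/s + α/q) = q / s + α := by
    field_simp
  refine le_of_mul_le_mul_left ?_ hq0
  rw [e1, e2]
  exact hmain
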